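/- For n ≥ 1, the full arc complex of a non-orientable crown with n boundary vertices simplicially collapses onto its inner arc complex; consequently it is collapsible. -/

import Mathlib

open Finset

attribute [local instance] Classical.propDecidable

noncomputable section

universe u v

/-- A finite abstract simplicial complex: a finite collection of nonempty finite sets
closed under taking nonempty subsets. -/
def IsComplex {V : Type u} (X : Finset (Finset V)) : Prop :=
  (∀ s ∈ X, s.Nonempty) ∧ ∀ s ∈ X, ∀ t : Finset V, t ⊆ s → t.Nonempty → t ∈ X

/-- `s` is a maximal simplex (facet) of `X`. -/
def IsFacet {V : Type u} (X : Finset (Finset V)) (s : Finset V) : Prop :=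
  s ∈ X ∧ ∀ t ∈ X, s ⊆ t → t = s

/-- An elementary collapse: `σ` is a free face of `X` whose unique maximal coface is `τ`,
and `Y` results from removing all simplices containing `σ`. -/
def ElemCollapse {V : Type u} (X Y : Finset (Finset V)) : Prop :=
  ∃ σ τ : Finset V, σ ∈ X ∧ IsFacet X τ ∧ σ ⊂ τ ∧
    (∀ t ∈ X, σ ⊆ t → t ⊆ τ) ∧ Y = X.filter (fun s => ¬ σ ⊆ s)

/-- `X` simplicially collapses onto `Y`. -/
def Collapses {V : Type u} (X Y : Finset (Finset V)) : Prop :=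
  Relation.ReflTransGen ElemCollapse X Y

/-- `X` is collapsible: it collapses to a single vertex. -/
def Collapsible {V : Type u} (X : Finset (Finset V)) : Prop :=
  ∃ v : V, Collapses X {{v}}

/-- The vertex `v` is dominated by the vertex `w ≠ v`: every facet containing `v`
contains `w`. -/
def Dominated {V : Type u} (X : Finset (Finset V)) (v w : V) : Prop :=
  w ≠ v ∧ ∀ s : Finset V, IsFacet X s → v ∈ s → w ∈ s

/-- An elementary strong collapse: deletion of a dominated vertex. -/
def ElemStrongCollapse {V : Type u} (X Y : Finset (Finset V)) : Prop :=
  ∃ v w : V, {v} ∈ X ∧ Dominated X v w ∧ Y = X.filter (fun s => v ∉ s)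

/-- `X` strongly collapses onto `Y`. -/
def StrongCollapses {V : Type u} (X Y : Finset (Finset V)) : Prop :=
  Relation.ReflTransGen ElemStrongCollapse X Y

/-- `X` is strongly collapsible: it strongly collapses to a single vertex. -/
def StrongCollapsible {V : Type u} (X : Finset (Finset V)) : Prop :=
  ∃ v : V, StrongCollapses X {{v}}

/-- The set of vertices of a complex. -/
def vertexSet {V : Type u} (X : Finset (Finset V)) : Finset V := X.sup id

/-- The link of a simplex `σ` in `X`. -/
def linkC {V : Type u} (X : Finset (Finset V)) (σ : Finset V) : Finset (Finset V) :=
  X.filter (fun η => Disjoint η σ ∧ η ∪ σ ∈ X)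

/-- The face-deletion of `σ` in `X`. -/
def faceDeletion {V : Type u} (X : Finset (Finset V)) (σ : Finset V) : Finset (Finset V) :=
  X.filter (fun η => ¬ σ ⊆ η)

/-- The simplicial join of two complexes (on disjoint vertex sets, via `Sum`). -/
def joinC {A : Type u} {B : Type v} (X : Finset (Finset A)) (Y : Finset (Finset B)) :
    Finset (Finset (A ⊕ B)) :=
  (((insert (∅ : Finset A) X) ×ˢ (insert (∅ : Finset B) Y)).image
      (fun p => p.1.image Sum.inl ∪ p.2.image Sum.inr)).filter (·.Nonempty)

/-- The flag (clique) complex on the admissible vertices (those satisfying `P`) of a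
finite type, with respect to a (reflexive, symmetric) compatibility relation `R`:
simplices are the nonempty finite sets of admissible vertices that are pairwise
compatible. -/
def cliqueComplex {A : Type u} [Fintype A] (P : A → Prop) (R : A → A → Prop) :
    Finset (Finset A) :=
  Finset.univ.filter (fun s : Finset A =>
    s.Nonempty ∧ (∀ a ∈ s, P a) ∧ ∀ a ∈ s, ∀ b ∈ s, R a b)

/-- A complex is a cone if some vertex lies in every maximal simplex. -/
def IsCone {A : Type u} (X : Finset (Finset A)) : Prop :=
  ∃ v : A, {v} ∈ X ∧ ∀ s, IsFacet X s → v ∈ s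

/-- Simplicial isomorphism (onto): `Y` is the image of `X` under an injection of
vertices. -/
def Isom {A : Type u} {B : Type v} (X : Finset (Finset A)) (Y : Finset (Finset B)) : Prop :=
  ∃ f : A → B, Function.Injective f ∧ Y = X.image (fun s => s.image f)

/-! ### A combinatorial model of the arc complex of a non-orientable crown `M(n)`
(a Möbius strip with `n` marked boundary vertices, labelled by `Fin n` in cyclic
order). -/

/-- `k` lies in the closed cyclic interval from `i` to `j` (counterclockwise); by
convention the interval is the full circle when `i = j`. -/
def btwn {n : ℕ} (i j k : Fin n) : Prop :=
  if i = j then True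
  else if i.val ≤ j.val then i.val ≤ k.val ∧ k.val ≤ j.val
  else i.val ≤ k.val ∨ k.val ≤ j.val

/-- `k` lies strictly inside the cyclic interval from `i` to `j`. -/
def sbtwn {n : ℕ} (i j k : Fin n) : Prop := btwn i j k ∧ k ≠ i ∧ k ≠ j

/-- Disjointness (compatibility) of two boundary arcs (b-arcs), each encoded by the
ordered pair `(i, j)` of its endpoints, the polygonal side being the cyclic interval
`[i..j]` (the pair `(i, i)` encodes the maximal b-arc `M i`, whose polygonal side is
the whole circle): the polygonal sides must be nested (with no endpoint of the outer
arc strictly inside the inner interval) or have disjoint interiors. -/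
def bbDisj {n : ℕ} (p q : Fin n × Fin n) : Prop :=
  p = q ∨
  ((∀ k, btwn p.1 p.2 k → btwn q.1 q.2 k) ∧ ¬ sbtwn p.1 p.2 q.1 ∧ ¬ sbtwn p.1 p.2 q.2) ∨
  ((∀ k, btwn q.1 q.2 k → btwn p.1 p.2 k) ∧ ¬ sbtwn q.1 q.2 p.1 ∧ ¬ sbtwn q.1 q.2 p.2) ∨
  ((∀ k, ¬ (sbtwn p.1 p.2 k ∧ btwn q.1 q.2 k)) ∧ ∀ k, ¬ (btwn p.1 p.2 k ∧ sbtwn q.1 q.2 k))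

/-- Disjointness of two c-arcs of the Möbius crown.  A c-arc is encoded by the pair
`(i, j)` of its endpoints with `i ≤ j` (so `(i, i)` is the maximal c-arc `L i`).
Cutting along the c-arc `(p₁, p₂)` produces a strip whose two sides carry the closed
intervals `[p₁..p₂]` and its closed complement; a c-arc `(q₁, q₂)` is disjoint from it
iff one of its endpoints lies in the first closed interval and the other in the
second. -/
def cDisjMob {n : ℕ} (p q : Fin n × Fin n) : Prop :=
  p = q ∨
  (p.1 ≤ q.1 ∧ q.1 ≤ p.2 ∧ (q.2 ≤ p.1 ∨ p.2 ≤ q.2)) ∨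
  (p.1 ≤ q.2 ∧ q.2 ≤ p.2 ∧ (q.1 ≤ p.1 ∨ p.2 ≤ q.1))

/-- Arcs of the non-orientable crown `M(n)`: `Sum.inl (i, j)` (with `i ≤ j`) is the
c-arc joining `i` and `j` (the maximal c-arc `L i` when `i = j`); `Sum.inr (i, j)` is
the b-arc with endpoints `i, j` whose polygonal side is the cyclic interval `[i..j]`
(the maximal b-arc `M i` when `i = j`). -/
abbrev MobArc (n : ℕ) := (Fin n × Fin n) ⊕ (Fin n × Fin n)

/-- Disjointness (compatibility, up to homotopy) of arcs of the non-orientable crown: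
a c-arc is disjoint from a b-arc iff neither of its endpoints lies strictly inside the
polygonal side of the b-arc. -/
def mobDisj {n : ℕ} : MobArc n → MobArc n → Prop
  | Sum.inl p, Sum.inl q => cDisjMob p q
  | Sum.inl p, Sum.inr q => ¬ sbtwn q.1 q.2 p.1 ∧ ¬ sbtwn q.1 q.2 p.2
  | Sum.inr q, Sum.inl p => ¬ sbtwn q.1 q.2 p.1 ∧ ¬ sbtwn q.1 q.2 p.2
  | Sum.inr p, Sum.inr q => bbDisj p q

/-- Validity: c-arcs are encoded with `i ≤ j`; the maximal b-arcs `M i` are nontrivial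
only when `n ≥ 2`. -/
def mobValid {n : ℕ} : MobArc n → Prop
  | Sum.inl p => p.1 ≤ p.2
  | Sum.inr p => p.1 ≠ p.2 ∨ 2 ≤ n

/-- The full arc complex of the non-orientable crown `M(n)`. -/
def mobComplex (n : ℕ) : Finset (Finset (MobArc n)) :=
  cliqueComplex mobValid mobDisj

/-- The inner arc complex of `M(n)`, the subcomplex spanned by the c-arcs. -/
def innerMobComplex (n : ℕ) : Finset (Finset (MobArc n)) :=
  (mobComplex n).filter (fun s => ∀ a ∈ s, a.isLeft = true)

/-- The inner arc complex of `M(n)`, directly as a flag complex on c-arcs. -/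
def innerMob (n : ℕ) : Finset (Finset (Fin n × Fin n)) :=
  cliqueComplex (fun p => p.1 ≤ p.2) cDisjMob

section Generic
variable {V : Type u}

/-- Every simplex of a finite complex is contained in a facet. -/
lemma exists_facet (X : Finset (Finset V)) {s : Finset V} (hs : s ∈ X) :
    ∃ F, IsFacet X F ∧ s ⊆ F := by
  classical
  obtain ⟨F, hF, hmax⟩ := (X.filter (fun t => s ⊆ t)).exists_max_image Finset.card
    ⟨s, by simp [hs]⟩
  simp only [Finset.mem_filter] at hF
  refine ⟨F, ⟨hF.1, ?_⟩, hF.2⟩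
  intro t ht hFt
  have hst : s ⊆ t := hF.2.trans hFt
  have := hmax t (by simp [ht, hst])
  exact (Finset.eq_of_subset_of_card_le hFt this).symm

lemma dominated_collapse_aux (v w : V) :
    ∀ N : ℕ, ∀ X : Finset (Finset V), (X.filter (fun s => v ∈ s)).card ≤ N →
      IsComplex X → {v} ∈ X → Dominated X v w →
      Collapses X (X.filter (fun s => v ∉ s)) := by
  classical
  intro N
  induction N with
  | zero =>
    intro X hcard _ hv _
    have h1 : {v} ∈ X.filter (fun s => v ∈ s) := by simp [hv]
    have := Finset.card_pos.2 ⟨_, h1⟩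
    omega
  | succ N IH =>
    intro X hcard hX hv hdom
    obtain ⟨hwv, hfac⟩ := hdom
    -- the set of simplices containing v but not w
    set D := X.filter (fun s => v ∈ s ∧ w ∉ s) with hD
    have hvD : {v} ∈ D := by
      simp [hD, hv, Finset.mem_singleton]
      exact fun h => hwv h
    obtain ⟨σ, hσD, hσmax⟩ := D.exists_max_image Finset.card ⟨{v}, hvD⟩
    simp only [hD, Finset.mem_filter] at hσD
    obtain ⟨hσX, hvσ, hwσ⟩ := hσD
    -- σ ∪ {w} ∈ X
    obtain ⟨F, hFfac, hσF⟩ := exists_facet X hσX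
    have hwF : w ∈ F := hfac F hFfac (hσF hvσ)
    have hτX : insert w σ ∈ X := hX.2 F hFfac.1 _ (Finset.insert_subset hwF hσF)
      ⟨w, Finset.mem_insert_self _ _⟩
    -- cofaces of σ are contained in insert w σ
    have hcof : ∀ t ∈ X, σ ⊆ t → t ⊆ insert w σ := by
      intro t htX hσt
      by_cases hwt : w ∈ t
      · have htw : t.erase w ∈ X := by
          refine hX.2 t htX _ (Finset.erase_subset _ _) ⟨v, ?_⟩
          exact Finset.mem_erase.2 ⟨fun h => hwv h.symm, hσt hvσ⟩
        have hσte : σ ⊆ t.erase w := fun x hx =>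
          Finset.mem_erase.2 ⟨fun h => hwσ (h ▸ hx), hσt hx⟩
        have hteD : t.erase w ∈ D := by
          simp only [hD, Finset.mem_filter]
          exact ⟨htw, Finset.mem_erase.2 ⟨fun h => hwv h.symm, hσt hvσ⟩, by simp⟩
        have hte : t.erase w = σ :=
          (Finset.eq_of_subset_of_card_le hσte (hσmax _ hteD)).symm
        intro x hx
        by_cases hxw : x = w
        · exact hxw ▸ Finset.mem_insert_self _ _
        · exact Finset.mem_insert.2 (Or.inr (hte ▸ Finset.mem_erase.2 ⟨hxw, hx⟩))
      · have htD : t ∈ D := by simp [hD, htX, hσt hvσ, hwt]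
        have : t = σ := (Finset.eq_of_subset_of_card_le hσt (hσmax t htD)).symm
        exact this ▸ (Finset.subset_insert _ _)
    have hfacet : IsFacet X (insert w σ) := by
      refine ⟨hτX, fun t htX hsub => ?_⟩
      have := hcof t htX ((Finset.subset_insert w σ).trans hsub)
      exact Finset.Subset.antisymm this hsub
    have hstep : ElemCollapse X (X.filter (fun s => ¬ σ ⊆ s)) := by
      refine ⟨σ, insert w σ, hσX, hfacet, ?_, hcof, rfl⟩
      exact Finset.ssubset_insert hwσ
    by_cases hσv : σ = {v}
    · have : X.filter (fun s => ¬ σ ⊆ s) = X.filter (fun s => v ∉ s) := by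
        apply Finset.filter_congr
        intro s _
        simp [hσv, Finset.singleton_subset_iff]
      exact Relation.ReflTransGen.single (this ▸ hstep)
    · set X' := X.filter (fun s => ¬ σ ⊆ s) with hX'
      have hX'sub : X' ⊆ X := Finset.filter_subset _ _
      have hX'comp : IsComplex X' := by
        constructor
        · intro s hs
          exact hX.1 s (hX'sub hs)
        · intro s hs t hts htne
          have hsX := hX'sub hs
          refine Finset.mem_filter.2 ⟨hX.2 s hsX t hts htne, ?_⟩
          intro hσt
          exact (Finset.mem_filter.1 hs).2 (hσt.trans hts)
      have hvX' : {v} ∈ X' := by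
        refine Finset.mem_filter.2 ⟨hv, ?_⟩
        intro hσsub
        exact hσv (Finset.Subset.antisymm hσsub (Finset.singleton_subset_iff.2 hvσ))
      have hdom' : Dominated X' v w := by
        refine ⟨hwv, ?_⟩
        intro s hsfac hvs
        have hsX : s ∈ X := hX'sub hsfac.1
        obtain ⟨F, hFfac, hsF⟩ := exists_facet X hsX
        have hwF : w ∈ F := hfac F hFfac (hsF hvs)
        have hswX : insert w s ∈ X := hX.2 F hFfac.1 _ (Finset.insert_subset hwF hsF)
          ⟨w, Finset.mem_insert_self _ _⟩
        have hswX' : insert w s ∈ X' := by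
          refine Finset.mem_filter.2 ⟨hswX, ?_⟩
          intro hσsub
          refine (Finset.mem_filter.1 hsfac.1).2 (fun x hx => ?_)
          rcases Finset.mem_insert.1 (hσsub hx) with h | h
          · exact absurd (h ▸ hx) hwσ
          · exact h
        have := hsfac.2 _ hswX' (Finset.subset_insert _ _)
        exact this ▸ Finset.mem_insert_self _ _
      have hcard' : (X'.filter (fun s => v ∈ s)).card ≤ N := by
        have hss : X'.filter (fun s => v ∈ s) ⊂ X.filter (fun s => v ∈ s) := by
          refine Finset.ssubset_iff_of_subset (fun s hs => ?_) |>.2 ?_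
          · exact Finset.mem_filter.2 ⟨hX'sub (Finset.mem_filter.1 hs).1,
              (Finset.mem_filter.1 hs).2⟩
          · refine ⟨σ, Finset.mem_filter.2 ⟨hσX, hvσ⟩, ?_⟩
            intro hmem
            exact (Finset.mem_filter.1 ((Finset.mem_filter.1 hmem).1)).2
              (Finset.Subset.refl σ)
        have := Finset.card_lt_card hss
        omega
      have htail := IH X' hcard' hX'comp hvX' hdom'
      have hfin : X'.filter (fun s => v ∉ s) = X.filter (fun s => v ∉ s) := by
        rw [hX', Finset.filter_filter]
        apply Finset.filter_congr
        intro s _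
        constructor
        · intro h; exact h.2
        · intro h; exact ⟨fun hσs => h (hσs hvσ), h⟩
      exact Relation.ReflTransGen.head hstep (hfin ▸ htail)

variable {A : Type u} [Fintype A]

lemma mem_cliqueComplex {P : A → Prop} {R : A → A → Prop} {s : Finset A} :
    s ∈ cliqueComplex P R ↔ s.Nonempty ∧ (∀ a ∈ s, P a) ∧ ∀ a ∈ s, ∀ b ∈ s, R a b := by
  simp [cliqueComplex]

lemma cliqueComplex_congr {P P' : A → Prop} {R : A → A → Prop} (h : ∀ a, P a ↔ P' a) :
    cliqueComplex P R = cliqueComplex P' R := by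
  ext s
  simp only [mem_cliqueComplex]
  constructor
  · rintro ⟨h1, h2, h3⟩; exact ⟨h1, fun a ha => (h a).1 (h2 a ha), h3⟩
  · rintro ⟨h1, h2, h3⟩; exact ⟨h1, fun a ha => (h a).2 (h2 a ha), h3⟩

lemma isComplex_cliqueComplex {P : A → Prop} {R : A → A → Prop} :
    IsComplex (cliqueComplex P R) := by
  constructor
  · intro s hs; exact (mem_cliqueComplex.1 hs).1
  · intro s hs t hts htne
    obtain ⟨_, h2, h3⟩ := mem_cliqueComplex.1 hs
    exact mem_cliqueComplex.2 ⟨htne, fun a ha => h2 a (hts ha),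
      fun a ha b hb => h3 a (hts ha) b (hts hb)⟩

lemma cliqueComplex_filter_not_mem {P : A → Prop} {R : A → A → Prop} (v : A) :
    (cliqueComplex P R).filter (fun s => v ∉ s)
      = cliqueComplex (fun a => P a ∧ a ≠ v) R := by
  ext s
  simp only [Finset.mem_filter, mem_cliqueComplex]
  constructor
  · rintro ⟨⟨h1, h2, h3⟩, h4⟩
    exact ⟨h1, fun a ha => ⟨h2 a ha, fun h => h4 (h ▸ ha)⟩, h3⟩
  · rintro ⟨h1, h2, h3⟩
    exact ⟨⟨h1, fun a ha => (h2 a ha).1, h3⟩, fun hv => (h2 v hv).2 rfl⟩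

lemma cliqueComplex_single {P : A → Prop} {R : A → A → Prop} (v : A)
    (h : ∀ a, P a ↔ a = v) (hR : R v v) :
    cliqueComplex P R = {{v}} := by
  ext s
  simp only [mem_cliqueComplex, Finset.mem_singleton]
  constructor
  · rintro ⟨⟨x, hx⟩, h2, _⟩
    apply Finset.Subset.antisymm
    · intro a ha
      simp [(h a).1 (h2 a ha)]
    · intro a ha
      rw [Finset.mem_singleton] at ha
      rw [ha, ← (h x).1 (h2 x hx)]
      exact hx
  · rintro rfl
    exact ⟨⟨v, by simp⟩, by simp [(h v).2 rfl], by simp [hR]⟩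

/-- One domination-deletion step for clique complexes. -/
lemma clique_step {P : A → Prop} {R : A → A → Prop} (v w : A)
    (hPv : P v) (hPw : P w) (hne : w ≠ v)
    (hRvv : R v v) (hRww : R w w) (hRvw : R v w) (hRwv : R w v)
    (hdom : ∀ u, P u → R u v → R v u → R u w ∧ R w u) :
    Collapses (cliqueComplex P R) (cliqueComplex (fun a => P a ∧ a ≠ v) R) := by
  have hv : {v} ∈ cliqueComplex P R :=
    mem_cliqueComplex.2 ⟨⟨v, by simp⟩, by simp [hPv], by simp [hRvv]⟩
  have hdomX : Dominated (cliqueComplex P R) v w := by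
    refine ⟨hne, ?_⟩
    intro s hsfac hvs
    obtain ⟨h1, h2, h3⟩ := mem_cliqueComplex.1 hsfac.1
    have hins : insert w s ∈ cliqueComplex P R := by
      refine mem_cliqueComplex.2 ⟨⟨v, Finset.mem_insert_of_mem hvs⟩, ?_, ?_⟩
      · intro a ha
        rcases Finset.mem_insert.1 ha with rfl | ha
        · exact hPw
        · exact h2 a ha
      · intro a ha b hb
        rcases Finset.mem_insert.1 ha with ha' | ha'
        · rcases Finset.mem_insert.1 hb with hb' | hb'
          · rw [ha', hb']; exact hRww
          · rw [ha']; exact (hdom b (h2 b hb') (h3 b hb' v hvs) (h3 v hvs b hb')).2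
        · rcases Finset.mem_insert.1 hb with hb' | hb'
          · rw [hb']; exact (hdom a (h2 a ha') (h3 a ha' v hvs) (h3 v hvs a ha')).1
          · exact h3 a ha' b hb'
    have := hsfac.2 _ hins (Finset.subset_insert _ _)
    exact this ▸ Finset.mem_insert_self _ _
  have := dominated_collapse_aux v w _ (cliqueComplex P R) le_rfl
    isComplex_cliqueComplex hv hdomX
  rwa [cliqueComplex_filter_not_mem] at this

/-- Cone extension: the base `L₀` together with the cone over `Lc` with apex `a`. -/
def coneExt {V : Type u} (a : V) (L₀ Lc : Finset (Finset V)) : Finset (Finset V) :=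
  (L₀ ∪ {{a}}) ∪ Lc.image (insert a)

section Cone
variable {V : Type u} {a : V} {L₀ : Finset (Finset V)}

lemma mem_coneExt {Lc : Finset (Finset V)} {t : Finset V} :
    t ∈ coneExt a L₀ Lc ↔ t ∈ L₀ ∨ t = {a} ∨ ∃ u ∈ Lc, t = insert a u := by
  unfold coneExt
  simp only [Finset.mem_union, Finset.mem_singleton, Finset.mem_image]
  constructor
  · rintro ((h | h) | ⟨u, hu, rfl⟩)
    · exact Or.inl h
    · exact Or.inr (Or.inl h)
    · exact Or.inr (Or.inr ⟨u, hu, rfl⟩)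
  · rintro (h | h | ⟨u, hu, rfl⟩)
    · exact Or.inl (Or.inl h)
    · exact Or.inl (Or.inr h)
    · exact Or.inr ⟨u, hu, rfl⟩

lemma coneExt_elem (hL : ∀ s ∈ L₀, a ∉ s ∧ s.Nonempty) {Lc Lc' : Finset (Finset V)}
    (hsub : Lc ⊆ L₀) (h : ElemCollapse Lc Lc') :
    ElemCollapse (coneExt a L₀ Lc) (coneExt a L₀ Lc') := by
  classical
  obtain ⟨σ, τ, hσ, hτfac, hστ, hcof, hY⟩ := h
  have haσ : a ∉ σ := (hL σ (hsub hσ)).1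
  have hσne : σ.Nonempty := (hL σ (hsub hσ)).2
  have haτ : a ∉ τ := (hL τ (hsub hτfac.1)).1
  -- cofaces of `insert a σ` in the cone are cones on cofaces of `σ`
  have key : ∀ t ∈ coneExt a L₀ Lc, insert a σ ⊆ t →
      ∃ u ∈ Lc, t = insert a u ∧ σ ⊆ u := by
    intro t ht hsub'
    rcases mem_coneExt.1 ht with ht' | ht' | ⟨u, hu, rfl⟩
    · exact absurd (hsub' (Finset.mem_insert_self a σ)) (hL t ht').1
    · subst ht'
      obtain ⟨x, hx⟩ := hσne
      have := hsub' (Finset.mem_insert_of_mem hx)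
      rw [Finset.mem_singleton] at this
      exact absurd (this ▸ hx) haσ
    · refine ⟨u, hu, rfl, fun x hx => ?_⟩
      rcases Finset.mem_insert.1 (hsub' (Finset.mem_insert_of_mem hx)) with h' | h'
      · exact absurd (h' ▸ hx) haσ
      · exact h'
  refine ⟨insert a σ, insert a τ,
    mem_coneExt.2 (Or.inr (Or.inr ⟨σ, hσ, rfl⟩)), ⟨?_, ?_⟩, ?_, ?_, ?_⟩
  · exact mem_coneExt.2 (Or.inr (Or.inr ⟨τ, hτfac.1, rfl⟩))
  · -- facet
    intro t ht hsub'
    obtain ⟨u, hu, rfl, hσu⟩ := key t ht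
      ((Finset.insert_subset_insert a hστ.subset).trans hsub')
    have hτu : τ ⊆ u := by
      intro x hx
      rcases Finset.mem_insert.1 (hsub' (Finset.mem_insert_of_mem hx)) with h' | h'
      · exact absurd (h' ▸ hx) haτ
      · exact h'
    rw [hτfac.2 u hu hτu]
  · -- strict inclusion
    rw [Finset.ssubset_def]
    refine ⟨Finset.insert_subset_insert a hστ.subset, ?_⟩
    intro hcontra
    obtain ⟨x, hxτ, hxσ⟩ := Finset.exists_of_ssubset hστ
    rcases Finset.mem_insert.1 (hcontra (Finset.mem_insert_of_mem hxτ)) with h' | h'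
    · exact haτ (h' ▸ hxτ)
    · exact hxσ h'
  · -- cofaces contained in the facet
    intro t ht hsub'
    obtain ⟨u, hu, rfl, hσu⟩ := key t ht hsub'
    exact Finset.insert_subset_insert a (hcof u hu hσu)
  · -- the filter equality
    subst hY
    ext t
    constructor
    · intro h
      rcases mem_coneExt.1 h with ht' | ht' | ⟨u, hu, rfl⟩
      · refine Finset.mem_filter.2 ⟨mem_coneExt.2 (Or.inl ht'), fun hcontra => ?_⟩
        exact (hL t ht').1 (hcontra (Finset.mem_insert_self a σ))
      · subst ht'
        refine Finset.mem_filter.2 ⟨mem_coneExt.2 (Or.inr (Or.inl rfl)),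
          fun hcontra => ?_⟩
        obtain ⟨x, hx⟩ := hσne
        have := hcontra (Finset.mem_insert_of_mem hx)
        rw [Finset.mem_singleton] at this
        exact haσ (this ▸ hx)
      · obtain ⟨hu', hnσu⟩ := Finset.mem_filter.1 hu
        refine Finset.mem_filter.2 ⟨mem_coneExt.2 (Or.inr (Or.inr ⟨u, hu', rfl⟩)),
          fun hcontra => ?_⟩
        refine hnσu (fun x hx => ?_)
        rcases Finset.mem_insert.1 (hcontra (Finset.mem_insert_of_mem hx)) with h' | h'
        · exact absurd (h' ▸ hx) haσ
        · exact h'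
    · intro h
      obtain ⟨ht, hns⟩ := Finset.mem_filter.1 h
      rcases mem_coneExt.1 ht with ht' | ht' | ⟨u, hu, rfl⟩
      · exact mem_coneExt.2 (Or.inl ht')
      · exact mem_coneExt.2 (Or.inr (Or.inl ht'))
      · refine mem_coneExt.2 (Or.inr (Or.inr
          ⟨u, Finset.mem_filter.2 ⟨hu, fun hσu => ?_⟩, rfl⟩))
        exact hns (Finset.insert_subset_insert a hσu)

lemma coneExt_collapses (hL : ∀ s ∈ L₀, a ∉ s ∧ s.Nonempty) {Lc Lc' : Finset (Finset V)}
    (hsub : Lc ⊆ L₀) (h : Collapses Lc Lc') :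
    Collapses (coneExt a L₀ Lc) (coneExt a L₀ Lc') := by
  induction h with
  | refl => exact Relation.ReflTransGen.refl
  | tail hab hbc ih =>
    rename_i b c
    have hb : b ⊆ L₀ := by
      have : ∀ p q : Finset (Finset V), Collapses p q → p ⊆ L₀ → q ⊆ L₀ := by
        intro p q hpq
        induction hpq with
        | refl => exact id
        | tail _ hbc ih =>
          intro hp
          obtain ⟨_, _, _, _, _, _, rfl⟩ := hbc
          exact (Finset.filter_subset _ _).trans (ih hp)
      exact this _ _ hab hsub
    exact Relation.ReflTransGen.tail ih (coneExt_elem hL hb hbc)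

lemma coneExt_final (hL : ∀ s ∈ L₀, a ∉ s ∧ s.Nonempty) {u : V} (hu : {u} ∈ L₀) :
    ElemCollapse (coneExt a L₀ {{u}}) L₀ := by
  classical
  have hau : a ≠ u := fun h => (hL {u} hu).1 (h ▸ Finset.mem_singleton_self u)
  refine ⟨{a}, {a, u}, ?_, ⟨?_, ?_⟩, ?_, ?_, ?_⟩
  · exact mem_coneExt.2 (Or.inr (Or.inl rfl))
  · refine mem_coneExt.2 (Or.inr (Or.inr ⟨{u}, Finset.mem_singleton_self _, ?_⟩))
    rfl
  · intro t ht hsub'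
    rcases mem_coneExt.1 ht with ht' | ht' | ⟨s, hs, rfl⟩
    · exact absurd (hsub' (by simp)) (hL t ht').1
    · subst ht'
      have := hsub' (Finset.mem_insert_of_mem (Finset.mem_singleton_self u))
      rw [Finset.mem_singleton] at this
      exact absurd this.symm hau
    · rw [Finset.mem_singleton] at hs
      subst hs
      rfl
  · rw [Finset.ssubset_def]
    constructor
    · intro x hx
      rw [Finset.mem_singleton] at hx
      simp [hx]
    · intro hcontra
      have := hcontra (Finset.mem_insert_of_mem (Finset.mem_singleton_self u))
      rw [Finset.mem_singleton] at this
      exact hau this.symm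
  · intro t ht hsub'
    rcases mem_coneExt.1 ht with ht' | ht' | ⟨s, hs, rfl⟩
    · exact absurd (hsub' (Finset.mem_singleton_self a)) (hL t ht').1
    · subst ht'
      intro x hx
      rw [Finset.mem_singleton] at hx
      simp [hx]
    · rw [Finset.mem_singleton] at hs
      subst hs
      intro x hx
      rcases Finset.mem_insert.1 hx with h' | h'
      · simp [h']
      · rw [Finset.mem_singleton] at h'
        simp [h']
  · ext t
    constructor
    · intro ht
      refine Finset.mem_filter.2 ⟨mem_coneExt.2 (Or.inl ht), ?_⟩
      rw [Finset.singleton_subset_iff]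
      exact (hL t ht).1
    · intro h
      obtain ⟨ht, hns⟩ := Finset.mem_filter.1 h
      rw [Finset.singleton_subset_iff] at hns
      rcases mem_coneExt.1 ht with ht' | ht' | ⟨s, hs, rfl⟩
      · exact ht'
      · exact absurd (ht' ▸ Finset.mem_singleton_self a) hns
      · exact absurd (Finset.mem_insert_self a s) hns
end Cone

section Arith
variable {n : ℕ}

lemma btwn_iff_of_ne_le {i j : Fin n} (hne : i.val ≠ j.val) (hle : i.val ≤ j.val)
    (k : Fin n) : btwn i j k ↔ (i.val ≤ k.val ∧ k.val ≤ j.val) := by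
  unfold btwn
  rw [if_neg (fun h => hne (congrArg Fin.val h)), if_pos hle]

lemma btwn_iff_of_gt {i j : Fin n} (hgt : ¬ i.val ≤ j.val) (k : Fin n) :
    btwn i j k ↔ (i.val ≤ k.val ∨ k.val ≤ j.val) := by
  unfold btwn
  rw [if_neg (fun h => hgt (le_of_eq (congrArg Fin.val h))), if_neg hgt]

lemma btwn_of_eq {i j : Fin n} (h : i = j) (k : Fin n) : btwn i j k := by
  unfold btwn
  rw [if_pos h]
  trivial

lemma sbtwn_adj {i j : Fin n} (hn : 2 ≤ n) (h1 : i.val = n - 1) (h2 : j.val = 0)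
    (k : Fin n) : ¬ sbtwn i j k := by
  have hk := k.isLt
  intro hcon
  obtain ⟨hb, hk1, hk2⟩ := hcon
  rw [btwn_iff_of_gt (by omega)] at hb
  rw [Ne, Fin.ext_iff] at hk1 hk2
  omega

lemma btwn_adj_iff {i j : Fin n} (hn : 2 ≤ n) (h1 : i.val = n - 1) (h2 : j.val = 0)
    (k : Fin n) : btwn i j k ↔ (k.val = n - 1 ∨ k.val = 0) := by
  have hk := k.isLt
  rw [btwn_iff_of_gt (by omega)]
  omega

/-- The short b-arc with endpoints `n-1, 0` is disjoint from every b-arc. -/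
lemma bb_adj (hn : 2 ≤ n) {i j : Fin n} (h1 : i.val = n - 1) (h2 : j.val = 0)
    (q : Fin n × Fin n) : bbDisj (i, j) q ∧ bbDisj q (i, j) := by
  by_cases hq : q.1 = q.2
  · constructor
    · exact Or.inr (Or.inl ⟨fun k _ => btwn_of_eq hq k,
        sbtwn_adj hn h1 h2 _, sbtwn_adj hn h1 h2 _⟩)
    · exact Or.inr (Or.inr (Or.inl ⟨fun k _ => btwn_of_eq hq k,
        sbtwn_adj hn h1 h2 _, sbtwn_adj hn h1 h2 _⟩))
  · by_cases hq2 : q.1.val ≤ q.2.val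
    · have hsb : ∀ k : Fin n, btwn i j k → ¬ sbtwn q.1 q.2 k := by
        intro k hb hs
        have hk := k.isLt
        rw [btwn_adj_iff hn h1 h2] at hb
        obtain ⟨hb', hk1, hk2⟩ := hs
        rw [btwn_iff_of_ne_le (fun h => hq (Fin.ext h)) hq2] at hb'
        rw [Ne, Fin.ext_iff] at hk1 hk2
        have := q.1.isLt
        have := q.2.isLt
        omega
      constructor
      · refine Or.inr (Or.inr (Or.inr ⟨fun k hk => ?_, fun k hk => ?_⟩))
        · exact (sbtwn_adj hn h1 h2 k) hk.1
        · exact hsb k hk.1 hk.2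
      · refine Or.inr (Or.inr (Or.inr ⟨fun k hk => ?_, fun k hk => ?_⟩))
        · exact hsb k hk.2 hk.1
        · exact (sbtwn_adj hn h1 h2 k) hk.2
    · have hmain : ∀ k : Fin n, btwn i j k → btwn q.1 q.2 k := by
        intro k hb
        rw [btwn_adj_iff hn h1 h2] at hb
        rw [btwn_iff_of_gt hq2]
        have := q.1.isLt
        have := q.2.isLt
        omega
      constructor
      · exact Or.inr (Or.inl ⟨hmain, sbtwn_adj hn h1 h2 _, sbtwn_adj hn h1 h2 _⟩)
      · exact Or.inr (Or.inr (Or.inl ⟨hmain, sbtwn_adj hn h1 h2 _, sbtwn_adj hn h1 h2 _⟩))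

/-- The apex b-arc is compatible with every arc. -/
lemma apex_compat (hn : 2 ≤ n) {i j : Fin n} (h1 : i.val = n - 1) (h2 : j.val = 0)
    (a : MobArc n) : mobDisj a (Sum.inr (i, j)) ∧ mobDisj (Sum.inr (i, j)) a := by
  cases a with
  | inl p =>
    exact ⟨⟨sbtwn_adj hn h1 h2 _, sbtwn_adj hn h1 h2 _⟩,
      ⟨sbtwn_adj hn h1 h2 _, sbtwn_adj hn h1 h2 _⟩⟩
  | inr q =>
    exact ⟨(bb_adj hn h1 h2 q).2, (bb_adj hn h1 h2 q).1⟩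

lemma cDisj_refl (p : Fin n × Fin n) : cDisjMob p p := Or.inl rfl

lemma cDisj_sameFirst {m b b' : Fin n} (h1 : m ≤ b) (h2 : m ≤ b') :
    cDisjMob (m, b) (m, b') := by
  unfold cDisjMob
  simp only [Fin.le_def] at *
  rcases le_total b.val b'.val with h | h
  · exact Or.inr (Or.inl ⟨le_refl _, h1, Or.inr h⟩)
  · exact Or.inr (Or.inr ⟨h2, h, Or.inl (le_refl _)⟩)

lemma cDisj_toTop {a b j t : Fin n} (ht : t.val = n - 1) (ha : a.val ≤ j.val)
    (hb : j.val ≤ b.val) : cDisjMob (a, b) (j, t) ∧ cDisjMob (j, t) (a, b) := by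
  have hbt := b.isLt
  unfold cDisjMob
  simp only [Fin.le_def]
  constructor
  · exact Or.inr (Or.inl ⟨ha, hb, Or.inr (by omega)⟩)
  · exact Or.inr (Or.inr ⟨hb, by omega, Or.inl ha⟩)

lemma cDisj_charMM {m a b : Fin n} (hma : m.val ≤ a.val) (hab : a.val ≤ b.val)
    (h : cDisjMob (m, m) (a, b)) : a.val = m.val := by
  unfold cDisjMob at h
  simp only [Prod.mk.injEq, Fin.ext_iff, Fin.le_def] at h
  omega

lemma cDisj_charMJ {m j a b : Fin n} (hm : m.val < a.val) (hab : a.val ≤ b.val)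
    (h : cDisjMob (m, j) (a, b)) : a.val ≤ j.val ∧ j.val ≤ b.val := by
  unfold cDisjMob at h
  simp only [Prod.mk.injEq, Fin.ext_iff, Fin.le_def] at h
  omega

end Arith

section Assembly
variable {n : ℕ}

/-- Remaining c-arc vertices after the lexicographic deletions up to `(m, j)`. -/
def QQ (n m j : ℕ) : MobArc n → Prop := fun a =>
  match a with
  | Sum.inl p => p.1 ≤ p.2 ∧ m ≤ p.1.val ∧ (p.1.val = m → j ≤ p.2.val)
  | Sum.inr _ => False

lemma QQ_inl {m j : ℕ} {p : Fin n × Fin n} :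
    QQ n m j (Sum.inl p) ↔ p.1 ≤ p.2 ∧ m ≤ p.1.val ∧ (p.1.val = m → j ≤ p.2.val) :=
  Iff.rfl

lemma QQ_inr {m j : ℕ} {q : Fin n × Fin n} : ¬ QQ n m j (Sum.inr q) := fun h => h

/-- The flag complex on a set of vertices of the crown. -/
def KK (n : ℕ) (P : MobArc n → Prop) : Finset (Finset (MobArc n)) :=
  cliqueComplex P mobDisj

lemma stepA (m : ℕ) {M T : Fin n} (hM : M.val = m) (hT : T.val = n - 1)
    (hm : m < n - 1) :
    Collapses (KK n (QQ n m m)) (KK n (QQ n m (m + 1))) := by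
  have key := clique_step (A := MobArc n) (P := QQ n m m) (R := mobDisj)
    (Sum.inl (M, M)) (Sum.inl (M, T))
    (QQ_inl.2 ⟨le_refl _, by (try dsimp only); omega, fun _ => by (try dsimp only); omega⟩)
    (QQ_inl.2 ⟨by rw [Fin.le_def]; (try dsimp only); omega, by (try dsimp only); omega, fun _ => by (try dsimp only); omega⟩)
    (by simp only [ne_eq, Sum.inl.injEq, Prod.mk.injEq, Fin.ext_iff]; omega)
    (cDisj_refl _) (cDisj_refl _)
    ((cDisj_sameFirst (le_refl _) (by rw [Fin.le_def]; (try dsimp only); omega)))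
    ((cDisj_sameFirst (by rw [Fin.le_def]; (try dsimp only); omega) (le_refl _)))
    ?_
  · have hcongr : cliqueComplex (fun a => QQ n m m a ∧ a ≠ Sum.inl (M, M)) mobDisj
        = KK n (QQ n m (m + 1)) := by
      apply cliqueComplex_congr
      intro a
      cases a with
      | inl p =>
        simp only [QQ_inl, ne_eq, Sum.inl.injEq, Prod.ext_iff, Fin.ext_iff, Fin.le_def]
        omega
      | inr q =>
        simp only [QQ_inr]
        simp [QQ]
    exact hcongr ▸ key
  · -- domination
    intro u hu huv hvu
    cases u with
    | inl p =>
      obtain ⟨hab, hma, _⟩ := QQ_inl.1 hu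
      rw [Fin.le_def] at hab
      have ha : p.1.val = M.val := by
        have := cDisj_charMM (by (try dsimp only); omega) hab hvu
        omega
      have hp1 : p = (M, p.2) := Prod.ext (Fin.ext (by (try dsimp only); omega)) rfl
      constructor
      · show cDisjMob p (M, T)
        rw [hp1]
        exact cDisj_sameFirst (by rw [Fin.le_def]; (try dsimp only); omega) (by rw [Fin.le_def]; (try dsimp only); omega)
      · show cDisjMob (M, T) p
        rw [hp1]
        exact cDisj_sameFirst (by rw [Fin.le_def]; (try dsimp only); omega) (by rw [Fin.le_def]; (try dsimp only); omega)
    | inr q => exact absurd hu QQ_inr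

lemma stepB (m j : ℕ) {M J T : Fin n} (hM : M.val = m) (hJ : J.val = j)
    (hT : T.val = n - 1) (hmj : m < j) (hj : j ≤ n - 1) :
    Collapses (KK n (QQ n m j)) (KK n (QQ n m (j + 1))) := by
  have key := clique_step (A := MobArc n) (P := QQ n m j) (R := mobDisj)
    (Sum.inl (M, J)) (Sum.inl (J, T))
    (QQ_inl.2 ⟨by rw [Fin.le_def]; (try dsimp only); omega, by (try dsimp only); omega, fun _ => by (try dsimp only); omega⟩)
    (QQ_inl.2 ⟨by rw [Fin.le_def]; (try dsimp only); omega, by (try dsimp only); omega, fun h => by (try dsimp only); omega⟩)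
    (by simp only [ne_eq, Sum.inl.injEq, Prod.mk.injEq, Fin.ext_iff]; omega)
    (cDisj_refl _) (cDisj_refl _)
    ((cDisj_toTop hT (by (try dsimp only); omega) (by (try dsimp only); omega)).1)
    ((cDisj_toTop hT (by (try dsimp only); omega) (by (try dsimp only); omega)).2)
    ?_
  · have hcongr : cliqueComplex (fun a => QQ n m j a ∧ a ≠ Sum.inl (M, J)) mobDisj
        = KK n (QQ n m (j + 1)) := by
      apply cliqueComplex_congr
      intro a
      cases a with
      | inl p =>
        simp only [QQ_inl, ne_eq, Sum.inl.injEq, Prod.ext_iff, Fin.ext_iff, Fin.le_def]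
        omega
      | inr q =>
        simp only [QQ_inr]
        simp [QQ]
    exact hcongr ▸ key
  · -- domination
    intro u hu huv hvu
    cases u with
    | inl p =>
      obtain ⟨hab, hma, hcond⟩ := QQ_inl.1 hu
      rw [Fin.le_def] at hab
      have hkey : p.1.val ≤ j ∧ j ≤ p.2.val := by
        rcases Nat.eq_or_lt_of_le hma with h | h
        · exact ⟨by omega, by have := hcond (by omega); omega⟩
        · have := cDisj_charMJ (by (try dsimp only); omega) hab hvu
          omega
      constructor
      · show cDisjMob p (J, T)
        have := cDisj_toTop (a := p.1) (b := p.2) (j := J) hT (by (try dsimp only); omega) (by (try dsimp only); omega)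
        simpa using this.1
      · show cDisjMob (J, T) p
        have := cDisj_toTop (a := p.1) (b := p.2) (j := J) hT (by (try dsimp only); omega) (by (try dsimp only); omega)
        simpa using this.2
    | inr q => exact absurd hu QQ_inr


lemma rollover (m : ℕ) : KK n (QQ n m n) = KK n (QQ n (m + 1) (m + 1)) := by
  apply cliqueComplex_congr
  intro a
  cases a with
  | inl p =>
    have h2 := p.2.isLt
    simp only [QQ_inl, Fin.le_def]
    omega
  | inr q => simp [QQ]

lemma KK_base (hn : 1 ≤ n) {T : Fin n} (hT : T.val = n - 1) :
    KK n (QQ n (n - 1) (n - 1)) = {{Sum.inl (T, T)}} := by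
  apply cliqueComplex_single
  · intro a
    cases a with
    | inl p =>
      have h1 := p.1.isLt
      have h2 := p.2.isLt
      simp only [QQ_inl, Fin.le_def, Sum.inl.injEq, Prod.ext_iff, Fin.ext_iff]
      omega
    | inr q => simp [QQ]
  · exact cDisj_refl _

lemma phase3_j (hn : 1 ≤ n) {T : Fin n} (hT : T.val = n - 1) :
    ∀ t m j, m < j → j + t = n →
      Collapses (KK n (QQ n m j)) (KK n (QQ n (m + 1) (m + 1))) := by
  intro t
  induction t with
  | zero =>
    intro m j _ hj
    have : j = n := by omega
    subst this
    rw [rollover]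
    exact Relation.ReflTransGen.refl
  | succ t IH =>
    intro m j hmj hj
    have hjn : j < n := by omega
    have step := stepB (n := n) m j (M := ⟨m, by omega⟩) (J := ⟨j, hjn⟩) (T := T)
      rfl rfl hT hmj (by omega)
    exact step.trans (IH m (j + 1) (by omega) (by omega))

lemma phase3_m (hn : 1 ≤ n) {T : Fin n} (hT : T.val = n - 1) :
    ∀ k m, m + k = n - 1 →
      Collapses (KK n (QQ n m m)) {{Sum.inl (T, T)}} := by
  intro k
  induction k with
  | zero =>
    intro m hm
    have : m = n - 1 := by omega
    subst this
    rw [KK_base hn hT]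
    exact Relation.ReflTransGen.refl
  | succ k IH =>
    intro m hm
    have hmlt : m < n - 1 := by omega
    have stA := stepA (n := n) m (M := ⟨m, by omega⟩) (T := T) rfl hT hmlt
    have stJ := phase3_j hn hT (n - (m + 1)) m (m + 1) (by omega) (by omega)
    exact (stA.trans stJ).trans (IH (m + 1) (by omega))

lemma phase3 (hn : 1 ≤ n) {T : Fin n} (hT : T.val = n - 1) :
    Collapses (KK n (QQ n 0 0)) {{Sum.inl (T, T)}} :=
  phase3_m hn hT (n - 1) 0 (by omega)

lemma inner_eq : innerMobComplex n = KK n (QQ n 0 0) := by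
  unfold innerMobComplex mobComplex KK
  ext s
  constructor
  · intro h
    obtain ⟨hs, h4⟩ := Finset.mem_filter.1 h
    obtain ⟨h1, h2, h3⟩ := mem_cliqueComplex.1 hs
    refine mem_cliqueComplex.2 ⟨h1, fun a ha => ?_, h3⟩
    cases a with
    | inl p => exact QQ_inl.2 ⟨h2 _ ha, by omega, fun _ => by omega⟩
    | inr q => simpa using h4 _ ha
  · intro h
    obtain ⟨h1, h2, h3⟩ := mem_cliqueComplex.1 h
    refine Finset.mem_filter.2 ⟨mem_cliqueComplex.2 ⟨h1, fun a ha => ?_, h3⟩,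
      fun a ha => ?_⟩
    · cases a with
      | inl p => exact (QQ_inl.1 (h2 _ ha)).1
      | inr q => exact absurd (h2 _ ha) QQ_inr
    · cases a with
      | inl p => rfl
      | inr q => exact absurd (h2 _ ha) QQ_inr


attribute [-instance] instDecidableEqSum

lemma bbDisj_refl (q : Fin n × Fin n) : bbDisj q q := Or.inl rfl

lemma apex_valid (hn2 : 2 ≤ n) {I J : Fin n} : mobValid (Sum.inr (I, J)) :=
  Or.inr hn2

lemma phase1_aux (hn2 : 2 ≤ n) {I J : Fin n} (hI : I.val = n - 1) (hJ : J.val = 0) :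
    ∀ T : Finset (MobArc n),
      (∀ a ∈ T, a.isLeft = false ∧ a ≠ Sum.inr (I, J)) →
      Collapses
        (KK n (fun a => mobValid a ∧
          (a.isLeft = true ∨ a = Sum.inr (I, J) ∨ a ∈ T)))
        (KK n (fun a => mobValid a ∧ (a.isLeft = true ∨ a = Sum.inr (I, J)))) := by
  intro T
  induction T using Finset.induction_on with
  | empty =>
    intro _
    rw [show (KK n (fun a => mobValid a ∧
        (a.isLeft = true ∨ a = Sum.inr (I, J) ∨ a ∈ (∅ : Finset (MobArc n)))))
        = KK n (fun a => mobValid a ∧ (a.isLeft = true ∨ a = Sum.inr (I, J))) from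
      cliqueComplex_congr (fun a => by simp)]
    exact Relation.ReflTransGen.refl
  | insert v T' hvT IH =>
    intro hT
    obtain ⟨hvleft, hvapex⟩ := hT v (Finset.mem_insert_self v T')
    obtain ⟨q, rfl⟩ : ∃ q, v = Sum.inr q := by
      cases v with
      | inl p => simp at hvleft
      | inr q => exact ⟨q, rfl⟩
    have key := clique_step (A := MobArc n)
      (P := fun a => mobValid a ∧ (a.isLeft = true ∨ a = Sum.inr (I, J) ∨
        a ∈ insert (Sum.inr q) T'))
      (R := mobDisj) (Sum.inr q) (Sum.inr (I, J))
      ⟨apex_valid hn2, Or.inr (Or.inr (Finset.mem_insert_self _ _))⟩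
      ⟨apex_valid hn2, Or.inr (Or.inl rfl)⟩
      (fun h => hvapex h.symm)
      (bbDisj_refl q) (bbDisj_refl (I, J))
      ((apex_compat hn2 hI hJ (Sum.inr q)).1)
      ((apex_compat hn2 hI hJ (Sum.inr q)).2)
      (fun u _ _ _ => apex_compat hn2 hI hJ u)
    have hcongr : cliqueComplex (fun a => (mobValid a ∧ (a.isLeft = true ∨
          a = Sum.inr (I, J) ∨ a ∈ insert (Sum.inr q) T')) ∧ a ≠ Sum.inr q) mobDisj
        = KK n (fun a => mobValid a ∧
          (a.isLeft = true ∨ a = Sum.inr (I, J) ∨ a ∈ T')) := by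
      apply cliqueComplex_congr
      intro a
      constructor
      · rintro ⟨⟨hval, hor⟩, hne⟩
        refine ⟨hval, ?_⟩
        rcases hor with h | h | h
        · exact Or.inl h
        · exact Or.inr (Or.inl h)
        · rcases Finset.mem_insert.1 h with h' | h'
          · exact absurd h' hne
          · exact Or.inr (Or.inr h')
      · rintro ⟨hval, hor⟩
        refine ⟨⟨hval, ?_⟩, ?_⟩
        · rcases hor with h | h | h
          · exact Or.inl h
          · exact Or.inr (Or.inl h)
          · exact Or.inr (Or.inr (Finset.mem_insert_of_mem h))
        · rcases hor with h | h | h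
          · intro hav
            rw [hav] at h
            simp at h
          · intro hav
            exact hvapex (by rw [← hav]; exact h)
          · intro hav
            exact hvT (hav ▸ h)
    exact (hcongr ▸ key).trans (IH (fun a ha => hT a (Finset.mem_insert_of_mem ha)))

lemma phase1 (hn2 : 2 ≤ n) {I J : Fin n} (hI : I.val = n - 1) (hJ : J.val = 0) :
    Collapses (mobComplex n)
      (KK n (fun a => mobValid a ∧ (a.isLeft = true ∨ a = Sum.inr (I, J)))) := by
  have h0 : mobComplex n = KK n (fun a => mobValid a ∧
      (a.isLeft = true ∨ a = Sum.inr (I, J) ∨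
        a ∈ Finset.univ.filter (fun a : MobArc n =>
          a.isLeft = false ∧ a ≠ Sum.inr (I, J)))) := by
    apply cliqueComplex_congr
    intro a
    constructor
    · intro hval
      refine ⟨hval, ?_⟩
      by_cases hl : a.isLeft = true
      · exact Or.inl hl
      · by_cases hap : a = Sum.inr (I, J)
        · exact Or.inr (Or.inl hap)
        · exact Or.inr (Or.inr (Finset.mem_filter.2 ⟨Finset.mem_univ _,
            by simpa using hl, hap⟩))
    · exact fun h => h.1
  rw [h0]
  exact phase1_aux hn2 hI hJ _ (fun a ha => (Finset.mem_filter.1 ha).2)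

lemma L0_apex_free {I J : Fin n} :
    ∀ s ∈ KK n (QQ n 0 0), Sum.inr (I, J) ∉ s ∧ s.Nonempty := by
  intro s hs
  obtain ⟨h1, h2, _⟩ := mem_cliqueComplex.1 hs
  exact ⟨fun hmem => QQ_inr (h2 _ hmem), h1⟩

lemma cone_eq (hn2 : 2 ≤ n) {I J : Fin n} (hI : I.val = n - 1) (hJ : J.val = 0) :
    KK n (fun a => mobValid a ∧ (a.isLeft = true ∨ a = Sum.inr (I, J)))
      = coneExt (Sum.inr (I, J)) (KK n (QQ n 0 0)) (KK n (QQ n 0 0)) := by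
  set ap : MobArc n := Sum.inr (I, J) with hap
  ext s
  constructor
  · intro h
    obtain ⟨h1, h2, h3⟩ := mem_cliqueComplex.1 h
    have helt : ∀ a ∈ s, a ≠ ap → QQ n 0 0 a := by
      intro a ha hane
      rcases (h2 a ha).2 with hl | hl
      · cases a with
        | inl p => exact QQ_inl.2 ⟨(h2 _ ha).1, by omega, fun _ => by omega⟩
        | inr q => simp at hl
      · exact absurd hl hane
    by_cases hmem : ap ∈ s
    · by_cases hone : ∀ x ∈ s, x = ap
      · refine mem_coneExt.2 (Or.inr (Or.inl ?_))
        exact Finset.eq_singleton_iff_unique_mem.2 ⟨hmem, hone⟩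
      · push_neg at hone
        refine mem_coneExt.2 (Or.inr (Or.inr ⟨s.erase ap, ?_, (Finset.insert_erase hmem).symm⟩))
        refine mem_cliqueComplex.2 ⟨?_, ?_, ?_⟩
        · obtain ⟨x, hx, hxne⟩ := hone
          exact ⟨x, Finset.mem_erase.2 ⟨hxne, hx⟩⟩
        · intro a ha
          obtain ⟨hane, ha'⟩ := Finset.mem_erase.1 ha
          exact helt a ha' hane
        · intro a ha b hb
          exact h3 a (Finset.erase_subset _ _ ha) b (Finset.erase_subset _ _ hb)
    · refine mem_coneExt.2 (Or.inl (mem_cliqueComplex.2 ⟨h1, ?_, h3⟩))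
      exact fun a ha => helt a ha (fun h' => hmem (h' ▸ ha))
  · intro h
    rcases mem_coneExt.1 h with hs | hs | ⟨u, hu, rfl⟩
    · obtain ⟨h1, h2, h3⟩ := mem_cliqueComplex.1 hs
      refine mem_cliqueComplex.2 ⟨h1, ?_, h3⟩
      intro a ha
      cases a with
      | inl p => exact ⟨(QQ_inl.1 (h2 _ ha)).1, Or.inl rfl⟩
      | inr q => exact absurd (h2 _ ha) QQ_inr
    · subst hs
      refine mem_cliqueComplex.2 ⟨⟨ap, Finset.mem_singleton_self _⟩, ?_, ?_⟩
      · intro a ha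
        rw [Finset.mem_singleton] at ha
        subst ha
        exact ⟨apex_valid hn2, Or.inr rfl⟩
      · intro a ha b hb
        rw [Finset.mem_singleton] at ha hb
        subst ha; subst hb
        exact bbDisj_refl _
    · obtain ⟨h1, h2, h3⟩ := mem_cliqueComplex.1 hu
      refine mem_cliqueComplex.2 ⟨⟨ap, Finset.mem_insert_self _ _⟩, ?_, ?_⟩
      · intro a ha
        rcases Finset.mem_insert.1 ha with h' | h'
        · subst h'
          exact ⟨apex_valid hn2, Or.inr rfl⟩
        · cases a with
          | inl p => exact ⟨(QQ_inl.1 (h2 _ h')).1, Or.inl rfl⟩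
          | inr q => exact absurd (h2 _ h') QQ_inr
      · intro a ha b hb
        rcases Finset.mem_insert.1 ha with ha' | ha' <;>
          rcases Finset.mem_insert.1 hb with hb' | hb'
        · rw [ha', hb']; exact bbDisj_refl _
        · rw [ha']; exact (apex_compat hn2 hI hJ b).2
        · rw [hb']; exact (apex_compat hn2 hI hJ a).1
        · exact h3 a ha' b hb'

lemma top_singleton_mem (hn : 1 ≤ n) {T : Fin n} (hT : T.val = n - 1) :
    {Sum.inl (T, T)} ∈ KK n (QQ n 0 0) := by
  refine mem_cliqueComplex.2 ⟨⟨_, Finset.mem_singleton_self _⟩, ?_, ?_⟩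
  · intro a ha
    rw [Finset.mem_singleton] at ha
    subst ha
    exact QQ_inl.2 ⟨le_refl _, by omega, fun _ => by omega⟩
  · intro a ha b hb
    rw [Finset.mem_singleton] at ha hb
    subst ha; subst hb
    exact cDisj_refl _

lemma phase2 (hn : 1 ≤ n) (hn2 : 2 ≤ n) {I J : Fin n} (hI : I.val = n - 1)
    (hJ : J.val = 0) :
    Collapses (KK n (fun a => mobValid a ∧ (a.isLeft = true ∨ a = Sum.inr (I, J))))
      (innerMobComplex n) := by
  rw [cone_eq hn2 hI hJ, inner_eq]
  have h₀ := L0_apex_free (n := n) (I := I) (J := J)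
  have hcol := phase3 (n := n) hn (T := I) hI
  refine (coneExt_collapses h₀ (Finset.Subset.refl _) hcol).trans ?_
  exact Relation.ReflTransGen.single (coneExt_final h₀ (top_singleton_mem hn hI))

set_option maxHeartbeats 1000000 in
/-- For `n ≥ 1`, the full arc complex of the non-orientable crown
`M(n)` simplicially collapses onto its inner arc complex; consequently it is
collapsible. -/
theorem stmt16 (n : ℕ) (hn : 1 ≤ n) :
    Collapses (mobComplex n) (innerMobComplex n) ∧
    Collapsible (mobComplex n) := by
  have hnpos : n - 1 < n := by omega
  set T : Fin n := ⟨n - 1, hnpos⟩ with hTdef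
  have hT : T.val = n - 1 := rfl
  by_cases hn2 : 2 ≤ n
  · have h0n : (0 : ℕ) < n := by omega
    have h1 := phase1 (n := n) hn2 (I := T) (J := ⟨0, h0n⟩) hT rfl
    have h2 := phase2 (n := n) hn hn2 (I := T) (J := ⟨0, h0n⟩) hT rfl
    have hfull := h1.trans h2
    have h3 : Collapses (innerMobComplex n) {{Sum.inl (T, T)}} := by
      rw [inner_eq]
      exact phase3 hn hT
    exact ⟨hfull, ⟨Sum.inl (T, T), hfull.trans h3⟩⟩
  · have hn1 : n = 1 := by omega
    have heq : mobComplex n = innerMobComplex n := by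
      unfold innerMobComplex
      ext s
      simp only [Finset.mem_filter]
      constructor
      · intro hs
        refine ⟨hs, ?_⟩
        intro a ha
        obtain ⟨_, h2, _⟩ := mem_cliqueComplex.1 hs
        cases a with
        | inl p => rfl
        | inr q =>
          rcases (h2 _ ha : q.1 ≠ q.2 ∨ 2 ≤ n) with h | h
          · have e1 := q.1.isLt
            have e2 := q.2.isLt
            exact absurd (Fin.ext (by omega)) h
          · omega
      · exact fun h => h.1
    have hcol : Collapses (innerMobComplex n) {{Sum.inl (T, T)}} := by
      rw [inner_eq]
      exact phase3 hn hT
    exact ⟨heq ▸ Relation.ReflTransGen.refl, ⟨Sum.inl (T, T), heq ▸ hcol⟩⟩
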